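/- Progress and preservation for vertex structure normalization: if Ω; Ψ ⊢ V : τ then there exists V' such that V normalizes to V' (written V ↓ V') and Ω; Ψ ⊢ V' : τ. -/

import Mathlib

/-- Availability annotations -/
inductive Avail : Type
  | avail : Avail
  | unavail : Avail
deriving DecidableEq

/-- Vertex structure (VS) types: single vertex, annotated products,
    type variables, corecursive types. -/
inductive VSTy : Type
  | vert : VSTy
  | prod : VSTy → Avail → VSTy → Avail → VSTy
  | tvar : ℕ → VSTy
  | corec : ℕ → VSTy → VSTy
deriving DecidableEq

/-- Substitution of a VS type for a type variable (capture-avoiding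
    in the sense of not descending under a binder that rebinds `t`). -/
def VSTy.subst (t : ℕ) (σ : VSTy) : VSTy → VSTy
  | .vert => .vert
  | .prod τ₁ a₁ τ₂ a₂ => .prod (VSTy.subst t σ τ₁) a₁ (VSTy.subst t σ τ₂) a₂
  | .tvar s => if s = t then σ else .tvar s
  | .corec s τ => if s = t then .corec s τ else .corec s (VSTy.subst t σ τ)

/-- VS subtyping. -/
inductive SubTy : VSTy → VSTy → Prop
  | refl (τ : VSTy) : SubTy τ τ
  | trans {τ τ'' τ' : VSTy} : SubTy τ τ'' → SubTy τ'' τ' → SubTy τ τ'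
  | prodLeft (τ₁ : VSTy) (a₁ : Avail) (τ₂ : VSTy) (a₂ : Avail) (τ₃ : VSTy) :
      SubTy (.prod τ₁ a₁ τ₂ a₂) (.prod τ₃ .unavail τ₂ a₂)
  | prodRight (τ₁ : VSTy) (a₁ : Avail) (τ₂ : VSTy) (a₂ : Avail) (τ₃ : VSTy) :
      SubTy (.prod τ₁ a₁ τ₂ a₂) (.prod τ₁ a₁ τ₃ .unavail)
  | prodCong {τ₁ τ₁' τ₂ τ₂' : VSTy} (a₁ a₂ : Avail) :
      SubTy τ₁ τ₁' → SubTy τ₂ τ₂' → SubTy (.prod τ₁ a₁ τ₂ a₂) (.prod τ₁' a₁ τ₂' a₂)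
  | corec1 (t : ℕ) (τ : VSTy) : SubTy (.corec t τ) (VSTy.subst t (.corec t τ) τ)
  | corec2 (t : ℕ) (τ : VSTy) : SubTy (VSTy.subst t (.corec t τ) τ) (.corec t τ)

/-- VS type splitting  τ ⇝ τ₁ ⋈ τ₂. -/
inductive VSplit : VSTy → VSTy → VSTy → Prop
  | prod (τ₁ τ₂ : VSTy) :
      VSplit (.prod τ₁ .avail τ₂ .avail)
            (.prod τ₁ .avail τ₂ .unavail)
            (.prod τ₁ .unavail τ₂ .avail)
  | both {τ₁ τ₁' τ₁'' τ₂ τ₂' τ₂'' : VSTy} :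
      VSplit τ₁ τ₁' τ₁'' → VSplit τ₂ τ₂' τ₂'' →
      VSplit (.prod τ₁ .avail τ₂ .avail)
            (.prod τ₁' .avail τ₂' .avail)
            (.prod τ₁'' .avail τ₂'' .avail)
  | left {τ₁ τ₁' τ₁'' : VSTy} (τ₂ : VSTy) (a : Avail) :
      VSplit τ₁ τ₁' τ₁'' →
      VSplit (.prod τ₁ .avail τ₂ a)
            (.prod τ₁' .avail τ₂ a)
            (.prod τ₁'' .avail τ₂ .unavail)
  | right {τ₂ τ₂' τ₂'' : VSTy} (τ₁ : VSTy) (a : Avail) :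
      VSplit τ₂ τ₂' τ₂'' →
      VSplit (.prod τ₁ a τ₂ .avail)
            (.prod τ₁ a τ₂' .avail)
            (.prod τ₁ .unavail τ₂'' .avail)
  | corec {t : ℕ} {τ τ₁ τ₂ : VSTy} :
      VSplit (VSTy.subst t (.corec t τ) τ) τ₁ τ₂ → VSplit (.corec t τ) τ₁ τ₂
  | sub {τ τ₁ τ₁' τ₂ : VSTy} :
      VSplit τ τ₁' τ₂ → SubTy τ₁' τ₁ → VSplit τ τ₁ τ₂
  | comm {τ τ₁ τ₂ : VSTy} : VSplit τ τ₂ τ₁ → VSplit τ τ₁ τ₂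

/-- Names bound in contexts: VS variables or generators. -/
inductive VName : Type
  | var : ℕ → VName
  | gen : ℕ → VName
deriving DecidableEq

/-- A context binds names to VS types. -/
abbrev Ctx := List (VName × VSTy)

/-- Affine context splitting  Ω ⇝ Ω₁ ⋈ Ω₂. -/
inductive CtxSplit : Ctx → Ctx → Ctx → Prop
  | empty : CtxSplit [] [] []
  | comm {Ω Ω₁ Ω₂ : Ctx} : CtxSplit Ω Ω₂ Ω₁ → CtxSplit Ω Ω₁ Ω₂
  | bind {Ω Ω₁ Ω₂ : Ctx} (x : VName) (τ : VSTy) :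
      CtxSplit Ω Ω₁ Ω₂ → CtxSplit ((x, τ) :: Ω) ((x, τ) :: Ω₁) Ω₂
  | typeSplit {Ω Ω₁ Ω₂ : Ctx} {τ τ₁ τ₂ : VSTy} (x : VName) :
      CtxSplit Ω Ω₁ Ω₂ → VSplit τ τ₁ τ₂ →
      CtxSplit ((x, τ) :: Ω) ((x, τ₁) :: Ω₁) ((x, τ₂) :: Ω₂)

/-- Vertex structures. -/
inductive VS : Type
  | var : ℕ → VS
  | gen : ℕ → VS
  | pair : VS → VS → VS
  | fst : VS → VS
  | snd : VS → VS
deriving DecidableEq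

/-- Typing of vertex structures:  Ω; Ψ ⊢ V : τ, with affine context Ω
    and unrestricted context Ψ. -/
inductive HasTy : Ctx → Ctx → VS → VSTy → Prop
  | omegaVar {Ω Ψ : Ctx} {u : ℕ} {τ : VSTy} :
      (VName.var u, τ) ∈ Ω → HasTy Ω Ψ (.var u) τ
  | psiVar {Ω Ψ : Ctx} {u : ℕ} {τ : VSTy} :
      (VName.var u, τ) ∈ Ψ → HasTy Ω Ψ (.var u) τ
  | omegaGen {Ω Ψ : Ctx} {g : ℕ} {τ : VSTy} :
      (VName.gen g, τ) ∈ Ω → HasTy Ω Ψ (.gen g) τ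
  | psiGen {Ω Ψ : Ctx} {g : ℕ} {τ : VSTy} :
      (VName.gen g, τ) ∈ Ψ → HasTy Ω Ψ (.gen g) τ
  | pair {Ω Ω₁ Ω₂ Ψ : Ctx} {V₁ V₂ : VS} {τ₁ τ₂ : VSTy} :
      CtxSplit Ω Ω₁ Ω₂ → HasTy Ω₁ Ψ V₁ τ₁ → HasTy Ω₂ Ψ V₂ τ₂ →
      HasTy Ω Ψ (.pair V₁ V₂) (.prod τ₁ .avail τ₂ .avail)
  | onlyLeftPair {Ω Ψ Ψ' : Ctx} {V₁ V₂ : VS} {τ₁ τ₂ : VSTy} :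
      HasTy Ω Ψ V₁ τ₁ → HasTy [] Ψ' V₂ τ₂ →
      HasTy Ω Ψ (.pair V₁ V₂) (.prod τ₁ .avail τ₂ .unavail)
  | onlyRightPair {Ω Ψ Ψ' : Ctx} {V₁ V₂ : VS} {τ₁ τ₂ : VSTy} :
      HasTy [] Ψ' V₁ τ₁ → HasTy Ω Ψ V₂ τ₂ →
      HasTy Ω Ψ (.pair V₁ V₂) (.prod τ₁ .unavail τ₂ .avail)
  | fst {Ω Ψ : Ctx} {V : VS} {τ₁ τ₂ : VSTy} {a : Avail} :
      HasTy Ω Ψ V (.prod τ₁ .avail τ₂ a) → HasTy Ω Ψ (.fst V) τ₁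
  | snd {Ω Ψ : Ctx} {V : VS} {τ₁ τ₂ : VSTy} {a : Avail} :
      HasTy Ω Ψ V (.prod τ₁ a τ₂ .avail) → HasTy Ω Ψ (.snd V) τ₂
  | sub {Ω Ψ : Ctx} {V : VS} {τ' τ : VSTy} :
      HasTy Ω Ψ V τ' → SubTy τ' τ → HasTy Ω Ψ V τ

/-- Big-step normalization of vertex structures  V ↓ V'. -/
inductive VNorm : VS → VS → Prop
  | var (u : ℕ) : VNorm (.var u) (.var u)
  | gen (g : ℕ) : VNorm (.gen g) (.gen g)
  | pair {V₁ V₁' V₂ V₂' : VS} :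
      VNorm V₁ V₁' → VNorm V₂ V₂' → VNorm (.pair V₁ V₂) (.pair V₁' V₂')
  | fstPair {V V₁ V₂ : VS} : VNorm V (.pair V₁ V₂) → VNorm (.fst V) V₁
  | fstNotPair {V V' : VS} :
      VNorm V V' → (∀ V₁ V₂, V' ≠ .pair V₁ V₂) → VNorm (.fst V) (.fst V')
  | sndPair {V V₁ V₂ : VS} : VNorm V (.pair V₁ V₂) → VNorm (.snd V) V₂
  | sndNotPair {V V' : VS} :
      VNorm V V' → (∀ V₁ V₂, V' ≠ .pair V₁ V₂) → VNorm (.snd V) (.snd V')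

/-- Vertex structure equivalence  Ψ ⊢ V ≡ V' : τ. -/
inductive VSEquiv : Ctx → VS → VS → VSTy → Prop
  | refl {Ψ : Ctx} {V : VS} {τ : VSTy} :
      HasTy [] Ψ V τ → VSEquiv Ψ V V τ
  | comm {Ψ : Ctx} {V V' : VS} {τ : VSTy} :
      VSEquiv Ψ V' V τ → VSEquiv Ψ V V' τ
  | trans {Ψ : Ctx} {V V'' V' : VS} {τ : VSTy} :
      VSEquiv Ψ V V'' τ → VSEquiv Ψ V'' V' τ → VSEquiv Ψ V V' τ
  | pair {Ψ : Ctx} {V₁ V₁' V₂ V₂' : VS} {τ₁ τ₂ : VSTy} :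
      VSEquiv Ψ V₁ V₁' τ₁ → VSEquiv Ψ V₂ V₂' τ₂ →
      VSEquiv Ψ (.pair V₁ V₂) (.pair V₁' V₂') (.prod τ₁ .avail τ₂ .avail)
  | onlyLeftPair {Ψ Ψ' : Ctx} {V₁ V₁' V₂ V₂' : VS} {τ₁ τ₂ : VSTy} :
      VSEquiv Ψ V₁ V₁' τ₁ → VSEquiv Ψ' V₂ V₂' τ₂ →
      VSEquiv Ψ (.pair V₁ V₂) (.pair V₁' V₂') (.prod τ₁ .avail τ₂ .unavail)
  | onlyRightPair {Ψ Ψ' : Ctx} {V₁ V₁' V₂ V₂' : VS} {τ₁ τ₂ : VSTy} :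
      VSEquiv Ψ' V₁ V₁' τ₁ → VSEquiv Ψ V₂ V₂' τ₂ →
      VSEquiv Ψ (.pair V₁ V₂) (.pair V₁' V₂') (.prod τ₁ .unavail τ₂ .avail)
  | fst {Ψ : Ctx} {V V' : VS} {τ₁ τ₂ : VSTy} {a : Avail} :
      VSEquiv Ψ V V' (.prod τ₁ .avail τ₂ a) → VSEquiv Ψ (.fst V) (.fst V') τ₁
  | snd {Ψ : Ctx} {V V' : VS} {τ₁ τ₂ : VSTy} {a : Avail} :
      VSEquiv Ψ V V' (.prod τ₁ a τ₂ .avail) → VSEquiv Ψ (.snd V) (.snd V') τ₂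
  | fstPair {Ψ : Ctx} {V V₁ V₂ : VS} {τ₁ τ₂ : VSTy} {a : Avail} :
      VSEquiv Ψ V (.pair V₁ V₂) (.prod τ₁ .avail τ₂ a) →
      VSEquiv Ψ (.fst V) V₁ τ₁
  | sndPair {Ψ : Ctx} {V V₁ V₂ : VS} {τ₁ τ₂ : VSTy} {a : Avail} :
      VSEquiv Ψ V (.pair V₁ V₂) (.prod τ₁ a τ₂ .avail) →
      VSEquiv Ψ (.snd V) V₂ τ₂
  | sub {Ψ : Ctx} {V V' : VS} {τ' τ : VSTy} :
      VSEquiv Ψ V V' τ' → SubTy τ' τ → VSEquiv Ψ V V' τ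

/-- VNeutral vertex structures: variables, generators, and their projections. -/
inductive VNeutral : VS → Prop
  | var (u : ℕ) : VNeutral (.var u)
  | gen (g : ℕ) : VNeutral (.gen g)
  | fst {V : VS} : VNeutral V → VNeutral (.fst V)
  | snd {V : VS} : VNeutral V → VNeutral (.snd V)

/-- VNormal vertex structures: neutral structures and pairs of normal structures. -/
inductive VNormal : VS → Prop
  | neutral {V : VS} : VNeutral V → VNormal V
  | pair {V₁ V₂ : VS} : VNormal V₁ → VNormal V₂ → VNormal (.pair V₁ V₂)

/-- Vertex paths: a generator followed by a sequence of projections. -/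
inductive IsPath : VS → Prop
  | gen (g : ℕ) : IsPath (.gen g)
  | fst {p : VS} : IsPath p → IsPath (.fst p)
  | snd {p : VS} : IsPath p → IsPath (.snd p)

/-- A context containing only generator bindings. -/
def GenOnly (Ω : Ctx) : Prop := ∀ e ∈ Ω, ∃ g τ, e = (VName.gen g, τ)

/-- Substitution of a vertex structure for a VS variable. -/
def VS.subst (u : ℕ) (W : VS) : VS → VS
  | .var v => if v = u then W else .var v
  | .gen g => .gen g
  | .pair V₁ V₂ => .pair (VS.subst u W V₁) (VS.subst u W V₂)
  | .fst V => .fst (VS.subst u W V)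
  | .snd V => .snd (VS.subst u W V)

/-! ### Auxiliary development -/

lemma vsplit_sub {τ τ₁ τ₂ : VSTy} (h : VSplit τ τ₁ τ₂) : SubTy τ τ₁ ∧ SubTy τ τ₂ := by
  induction h with
  | prod τ₁ τ₂ => exact ⟨SubTy.prodRight _ _ _ _ _, SubTy.prodLeft _ _ _ _ _⟩
  | both h₁ h₂ ih₁ ih₂ =>
      exact ⟨SubTy.prodCong _ _ ih₁.1 ih₂.1, SubTy.prodCong _ _ ih₁.2 ih₂.2⟩
  | left τ₂ a h ih =>
      exact ⟨SubTy.prodCong _ _ ih.1 (SubTy.refl _),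
        SubTy.trans (SubTy.prodCong _ _ ih.2 (SubTy.refl _)) (SubTy.prodRight _ _ _ _ _)⟩
  | right τ₁ a h ih =>
      exact ⟨SubTy.prodCong _ _ (SubTy.refl _) ih.1,
        SubTy.trans (SubTy.prodCong _ _ (SubTy.refl _) ih.2) (SubTy.prodLeft _ _ _ _ _)⟩
  | corec h ih => exact ⟨SubTy.trans (SubTy.corec1 _ _) ih.1, SubTy.trans (SubTy.corec1 _ _) ih.2⟩
  | sub h hs ih => exact ⟨SubTy.trans ih.1 hs, ih.2⟩
  | comm h ih => exact ⟨ih.2, ih.1⟩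

/-- Context subtyping: the left context is obtained from the right by
    dropping bindings and moving types up along subtyping. -/
inductive CtxLe : Ctx → Ctx → Prop
  | nil : CtxLe [] []
  | drop {Ω' Ω : Ctx} (x : VName) (τ : VSTy) : CtxLe Ω' Ω → CtxLe Ω' ((x, τ) :: Ω)
  | keep {Ω' Ω : Ctx} {τ' : VSTy} (x : VName) (τ : VSTy) :
      SubTy τ τ' → CtxLe Ω' Ω → CtxLe ((x, τ') :: Ω') ((x, τ) :: Ω)

lemma ctxsplit_le {Ω Ω₁ Ω₂ : Ctx} (h : CtxSplit Ω Ω₁ Ω₂) : CtxLe Ω₁ Ω ∧ CtxLe Ω₂ Ω := by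
  induction h with
  | empty => exact ⟨CtxLe.nil, CtxLe.nil⟩
  | comm h ih => exact ⟨ih.2, ih.1⟩
  | bind x τ h ih => exact ⟨CtxLe.keep x τ (SubTy.refl τ) ih.1, CtxLe.drop x τ ih.2⟩
  | typeSplit x h hs ih =>
      exact ⟨CtxLe.keep x _ (vsplit_sub hs).1 ih.1, CtxLe.keep x _ (vsplit_sub hs).2 ih.2⟩

lemma ctxle_mem {Ω' Ω : Ctx} (h : CtxLe Ω' Ω) {x : VName} {τ' : VSTy}
    (hm : (x, τ') ∈ Ω') : ∃ τ, (x, τ) ∈ Ω ∧ SubTy τ τ' := by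
  induction h with
  | nil => cases hm
  | drop y σ h ih =>
      obtain ⟨τ, hτ, hs⟩ := ih hm
      exact ⟨τ, List.mem_cons_of_mem _ hτ, hs⟩
  | keep y σ hs h ih =>
      rcases List.mem_cons.1 hm with h1 | h1
      · cases h1; exact ⟨σ, List.mem_cons_self, hs⟩
      · obtain ⟨τ, hτ, hs'⟩ := ih h1
        exact ⟨τ, List.mem_cons_of_mem _ hτ, hs'⟩

/-! Inner-induction helpers for contravariance of `VSplit` in its source. -/

lemma vsplit_left_unavail {X σ₁ σ₂ : VSTy} (h : VSplit X σ₁ σ₂) :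
    ∀ {A B C : VSTy} {a b : Avail}, X = .prod C .unavail B b →
      VSplit (.prod A a B b) σ₁ σ₂ := by
  induction h with
  | prod τ₁ τ₂ => intro A B C a b hX; cases hX
  | both h₁ h₂ ih₁ ih₂ => intro A B C a b hX; cases hX
  | left τ₂ a h ih => intro A B C a' b hX; cases hX
  | right τ₁ a h ih =>
      intro A B C a' b hX
      injection hX with h1 h2 h3 h4
      subst h1; subst h2; subst h3; subst h4
      refine VSplit.comm (VSplit.sub (VSplit.comm
        (VSplit.sub (VSplit.right A a' h) (SubTy.prodLeft _ _ _ _ _)))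
        (SubTy.prodLeft _ _ _ _ _))
  | corec h ih => intro A B C a b hX; cases hX
  | sub h hs ih => intro A B C a b hX; exact VSplit.sub (ih hX) hs
  | comm h ih => intro A B C a b hX; exact VSplit.comm (ih hX)

lemma vsplit_right_unavail {X σ₁ σ₂ : VSTy} (h : VSplit X σ₁ σ₂) :
    ∀ {A B C : VSTy} {a b : Avail}, X = .prod A a C .unavail →
      VSplit (.prod A a B b) σ₁ σ₂ := by
  induction h with
  | prod τ₁ τ₂ => intro A B C a b hX; cases hX
  | both h₁ h₂ ih₁ ih₂ => intro A B C a b hX; cases hX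
  | left τ₂ a h ih =>
      intro A B C a' b hX
      injection hX with h1 h2 h3 h4
      subst h1; subst h2; subst h3; subst h4
      exact VSplit.comm (VSplit.sub (VSplit.comm
        (VSplit.sub (VSplit.left B b h) (SubTy.prodRight _ _ _ _ _)))
        (SubTy.prodRight _ _ _ _ _))
  | right τ₁ a h ih => intro A B C a' b hX; cases hX
  | corec h ih => intro A B C a b hX; cases hX
  | sub h hs ih => intro A B C a b hX; exact VSplit.sub (ih hX) hs
  | comm h ih => intro A B C a b hX; exact VSplit.comm (ih hX)

lemma vsplit_cong {A A' B B' : VSTy} (hA : SubTy A A') (hB : SubTy B B')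
    (ihA : ∀ {σ₁ σ₂ : VSTy}, VSplit A' σ₁ σ₂ → VSplit A σ₁ σ₂)
    (ihB : ∀ {σ₁ σ₂ : VSTy}, VSplit B' σ₁ σ₂ → VSplit B σ₁ σ₂)
    {X σ₁ σ₂ : VSTy} (h : VSplit X σ₁ σ₂) :
    ∀ {a b : Avail}, X = .prod A' a B' b → VSplit (.prod A a B b) σ₁ σ₂ := by
  induction h with
  | prod τ₁ τ₂ =>
      intro a b hX
      injection hX with h1 h2 h3 h4
      subst h1; subst h2; subst h3; subst h4
      exact VSplit.comm (VSplit.sub (VSplit.comm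
        (VSplit.sub (VSplit.prod A B) (SubTy.prodCong _ _ hA hB)))
        (SubTy.prodCong _ _ hA hB))
  | both h₁ h₂ ih₁ ih₂ =>
      intro a b hX
      injection hX with h1 h2 h3 h4
      subst h1; subst h2; subst h3; subst h4
      exact VSplit.both (ihA h₁) (ihB h₂)
  | left τ₂ a h ih =>
      intro a' b hX
      injection hX with h1 h2 h3 h4
      subst h1; subst h2; subst h3; subst h4
      exact VSplit.comm (VSplit.sub (VSplit.comm
        (VSplit.sub (VSplit.left B _ (ihA h)) (SubTy.prodCong _ _ (SubTy.refl _) hB)))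
        (SubTy.prodCong _ _ (SubTy.refl _) hB))
  | right τ₁ a h ih =>
      intro a' b hX
      injection hX with h1 h2 h3 h4
      subst h1; subst h2; subst h3; subst h4
      exact VSplit.comm (VSplit.sub (VSplit.comm
        (VSplit.sub (VSplit.right A _ (ihB h)) (SubTy.prodCong _ _ hA (SubTy.refl _))))
        (SubTy.prodCong _ _ hA (SubTy.refl _)))
  | corec h ih => intro a b hX; cases hX
  | sub h hs ih => intro a b hX; exact VSplit.sub (ih hX) hs
  | comm h ih => intro a b hX; exact VSplit.comm (ih hX)

lemma vsplit_corec_inv {X σ₁ σ₂ : VSTy} (h : VSplit X σ₁ σ₂) :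
    ∀ {t : ℕ} {ρ : VSTy}, X = .corec t ρ → VSplit (VSTy.subst t (.corec t ρ) ρ) σ₁ σ₂ := by
  induction h with
  | prod τ₁ τ₂ => intro t ρ hX; cases hX
  | both h₁ h₂ ih₁ ih₂ => intro t ρ hX; cases hX
  | left τ₂ a h ih => intro t ρ hX; cases hX
  | right τ₁ a h ih => intro t ρ hX; cases hX
  | corec h ih =>
      intro t ρ hX
      injection hX with h1 h2
      subst h1; subst h2; exact h
  | sub h hs ih => intro t ρ hX; exact VSplit.sub (ih hX) hs
  | comm h ih => intro t ρ hX; exact VSplit.comm (ih hX)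

/-- Splitting is contravariant in the split type along subtyping. -/
lemma vsplit_sub_src {τ σ : VSTy} (h : SubTy τ σ) :
    ∀ {σ₁ σ₂ : VSTy}, VSplit σ σ₁ σ₂ → VSplit τ σ₁ σ₂ := by
  induction h with
  | refl τ => intro _ _ h; exact h
  | trans h₁ h₂ ih₁ ih₂ => intro _ _ h; exact ih₁ (ih₂ h)
  | prodLeft τ₁ a₁ τ₂ a₂ τ₃ => intro _ _ h; exact vsplit_left_unavail h rfl
  | prodRight τ₁ a₁ τ₂ a₂ τ₃ => intro _ _ h; exact vsplit_right_unavail h rfl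
  | prodCong a₁ a₂ h₁ h₂ ih₁ ih₂ =>
      intro _ _ h; exact vsplit_cong h₁ h₂ (fun hh => ih₁ hh) (fun hh => ih₂ hh) h rfl
  | corec1 t τ => intro _ _ h; exact VSplit.corec h
  | corec2 t τ => intro _ _ h; exact vsplit_corec_inv h rfl

lemma split_cons_inv {Ω Ω₁ Ω₂ : Ctx} (h : CtxSplit Ω Ω₁ Ω₂) :
    ∀ {x : VName} {σ : VSTy} {Ω₀ : Ctx}, Ω = (x, σ) :: Ω₀ →
      (∃ Ω₁', Ω₁ = (x, σ) :: Ω₁' ∧ CtxSplit Ω₀ Ω₁' Ω₂) ∨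
      (∃ Ω₂', Ω₂ = (x, σ) :: Ω₂' ∧ CtxSplit Ω₀ Ω₁ Ω₂') ∨
      (∃ σ₁ σ₂ Ω₁' Ω₂', Ω₁ = (x, σ₁) :: Ω₁' ∧ Ω₂ = (x, σ₂) :: Ω₂' ∧
        VSplit σ σ₁ σ₂ ∧ CtxSplit Ω₀ Ω₁' Ω₂') := by
  induction h with
  | empty => intro x σ Ω₀ hΩ; cases hΩ
  | comm h ih =>
      intro x σ Ω₀ hΩ
      rcases ih hΩ with ⟨Ω₁', h1, h2⟩ | ⟨Ω₂', h1, h2⟩ | ⟨σ₁, σ₂, Ω₁', Ω₂', h1, h2, h3, h4⟩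
      · exact Or.inr (Or.inl ⟨Ω₁', h1, CtxSplit.comm h2⟩)
      · exact Or.inl ⟨Ω₂', h1, CtxSplit.comm h2⟩
      · exact Or.inr (Or.inr ⟨σ₂, σ₁, Ω₂', Ω₁', h2, h1, VSplit.comm h3, CtxSplit.comm h4⟩)
  | bind y τ h ih =>
      intro x σ Ω₀ hΩ
      injection hΩ with h1 h2
      injection h1 with h1a h1b
      subst h1a; subst h1b; subst h2
      exact Or.inl ⟨_, rfl, h⟩
  | typeSplit y h hs ih =>
      intro x σ Ω₀ hΩ
      injection hΩ with h1 h2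
      injection h1 with h1a h1b
      subst h1a; subst h1b; subst h2
      exact Or.inr (Or.inr ⟨_, _, _, _, rfl, rfl, hs, h⟩)

lemma split_nil {Ω₁ Ω₂ : Ctx} (h : CtxSplit [] Ω₁ Ω₂) : Ω₁ = [] ∧ Ω₂ = [] := by
  generalize hΩ : ([] : Ctx) = Ω at h
  induction h with
  | empty => exact ⟨rfl, rfl⟩
  | comm h ih => exact ⟨(ih hΩ).2, (ih hΩ).1⟩
  | bind x τ h ih => cases hΩ
  | typeSplit x h hs ih => cases hΩ

lemma ctxle_split {Ω' Ω : Ctx} (hle : CtxLe Ω' Ω) :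
    ∀ {Ωa Ωb : Ctx}, CtxSplit Ω' Ωa Ωb →
      ∃ Ωa' Ωb', CtxSplit Ω Ωa' Ωb' ∧ CtxLe Ωa Ωa' ∧ CtxLe Ωb Ωb' := by
  induction hle with
  | nil =>
      intro Ωa Ωb h
      obtain ⟨h1, h2⟩ := split_nil h
      subst h1; subst h2
      exact ⟨[], [], CtxSplit.empty, CtxLe.nil, CtxLe.nil⟩
  | drop x τ hle ih =>
      intro Ωa Ωb h
      obtain ⟨Ωa', Ωb', hs, h1, h2⟩ := ih h
      exact ⟨(x, τ) :: Ωa', Ωb', CtxSplit.bind x τ hs, CtxLe.drop x τ h1, h2⟩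
  | @keep Ω' Ω τ' x τ hsub hle ih =>
      intro Ωa Ωb h
      rcases split_cons_inv h rfl with ⟨Ω₁', h1, h2⟩ | ⟨Ω₂', h1, h2⟩ |
        ⟨σ₁, σ₂, Ω₁', Ω₂', h1, h2, h3, h4⟩
      · subst h1
        obtain ⟨Ωa', Ωb', hs, hl1, hl2⟩ := ih h2
        exact ⟨(x, τ) :: Ωa', Ωb', CtxSplit.bind x τ hs, CtxLe.keep x τ hsub hl1, hl2⟩
      · subst h1
        obtain ⟨Ωa', Ωb', hs, hl1, hl2⟩ := ih h2
        exact ⟨Ωa', (x, τ) :: Ωb', CtxSplit.comm (CtxSplit.bind x τ (CtxSplit.comm hs)),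
          hl1, CtxLe.keep x τ hsub hl2⟩
      · subst h1; subst h2
        obtain ⟨Ωa', Ωb', hs, hl1, hl2⟩ := ih h4
        have hsplit : VSplit τ σ₁ σ₂ := vsplit_sub_src hsub h3
        exact ⟨(x, σ₁) :: Ωa', (x, σ₂) :: Ωb', CtxSplit.typeSplit x hs hsplit,
          CtxLe.keep x σ₁ (SubTy.refl _) hl1, CtxLe.keep x σ₂ (SubTy.refl _) hl2⟩

/-- Weakening along context subtyping. -/
lemma weaken {Ω' Ψ : Ctx} {V : VS} {τ : VSTy} (h : HasTy Ω' Ψ V τ) :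
    ∀ {Ω : Ctx}, CtxLe Ω' Ω → HasTy Ω Ψ V τ := by
  induction h with
  | omegaVar hm =>
      intro Ω hle
      obtain ⟨σ, hσ, hs⟩ := ctxle_mem hle hm
      exact HasTy.sub (HasTy.omegaVar hσ) hs
  | psiVar hm => intro Ω hle; exact HasTy.psiVar hm
  | omegaGen hm =>
      intro Ω hle
      obtain ⟨σ, hσ, hs⟩ := ctxle_mem hle hm
      exact HasTy.sub (HasTy.omegaGen hσ) hs
  | psiGen hm => intro Ω hle; exact HasTy.psiGen hm
  | pair hs h₁ h₂ ih₁ ih₂ =>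
      intro Ω hle
      obtain ⟨Ωa', Ωb', hs', hl1, hl2⟩ := ctxle_split hle hs
      exact HasTy.pair hs' (ih₁ hl1) (ih₂ hl2)
  | onlyLeftPair h₁ h₂ ih₁ ih₂ =>
      intro Ω hle
      exact HasTy.onlyLeftPair (ih₁ hle) (ih₂ CtxLe.nil)
  | onlyRightPair h₁ h₂ ih₁ ih₂ =>
      intro Ω hle
      exact HasTy.onlyRightPair (ih₁ CtxLe.nil) (ih₂ hle)
  | fst h ih => intro Ω hle; exact HasTy.fst (ih hle)
  | snd h ih => intro Ω hle; exact HasTy.snd (ih hle)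
  | sub h hs ih => intro Ω hle; exact HasTy.sub (ih hle) hs

/-- Left-projection behaviour of a type: `LProj τ τ₁` says that `τ`
    unrolls to a product whose available left component is `τ₁`. -/
inductive LProj : VSTy → VSTy → Prop
  | prod (τ₁ τ₂ : VSTy) (a : Avail) : LProj (.prod τ₁ .avail τ₂ a) τ₁
  | corec {t : ℕ} {ρ τ₁ : VSTy} :
      LProj (VSTy.subst t (.corec t ρ) ρ) τ₁ → LProj (.corec t ρ) τ₁

inductive RProj : VSTy → VSTy → Prop
  | prod (τ₁ τ₂ : VSTy) (a : Avail) : RProj (.prod τ₁ a τ₂ .avail) τ₂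
  | corec {t : ℕ} {ρ τ₂ : VSTy} :
      RProj (VSTy.subst t (.corec t ρ) ρ) τ₂ → RProj (.corec t ρ) τ₂

lemma lproj_sub {σ τ : VSTy} (h : SubTy σ τ) :
    ∀ {τ₁ : VSTy}, LProj τ τ₁ → ∃ σ₁, LProj σ σ₁ ∧ SubTy σ₁ τ₁ := by
  induction h with
  | refl τ => intro τ₁ h; exact ⟨τ₁, h, SubTy.refl _⟩
  | trans h₁ h₂ ih₁ ih₂ =>
      intro τ₁ h
      obtain ⟨μ₁, hμ, hs₁⟩ := ih₂ h
      obtain ⟨σ₁, hσ, hs₂⟩ := ih₁ hμ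
      exact ⟨σ₁, hσ, SubTy.trans hs₂ hs₁⟩
  | prodLeft τ₁ a₁ τ₂ a₂ τ₃ => intro x h; cases h
  | prodRight τ₁ a₁ τ₂ a₂ τ₃ =>
      intro x h
      cases h
      exact ⟨τ₁, LProj.prod _ _ _, SubTy.refl _⟩
  | prodCong a₁ a₂ h₁ h₂ ih₁ ih₂ =>
      intro x h
      cases h
      exact ⟨_, LProj.prod _ _ _, h₁⟩
  | corec1 t τ => intro x h; exact ⟨x, LProj.corec h, SubTy.refl _⟩
  | corec2 t τ =>
      intro x h
      cases h with
      | corec h' => exact ⟨x, h', SubTy.refl _⟩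

lemma rproj_sub {σ τ : VSTy} (h : SubTy σ τ) :
    ∀ {τ₂ : VSTy}, RProj τ τ₂ → ∃ σ₂, RProj σ σ₂ ∧ SubTy σ₂ τ₂ := by
  induction h with
  | refl τ => intro τ₂ h; exact ⟨τ₂, h, SubTy.refl _⟩
  | trans h₁ h₂ ih₁ ih₂ =>
      intro τ₂ h
      obtain ⟨μ₂, hμ, hs₁⟩ := ih₂ h
      obtain ⟨σ₂, hσ, hs₂⟩ := ih₁ hμ
      exact ⟨σ₂, hσ, SubTy.trans hs₂ hs₁⟩
  | prodLeft τ₁ a₁ τ₂ a₂ τ₃ =>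
      intro x h
      cases h
      exact ⟨τ₂, RProj.prod _ _ _, SubTy.refl _⟩
  | prodRight τ₁ a₁ τ₂ a₂ τ₃ => intro x h; cases h
  | prodCong a₁ a₂ h₁ h₂ ih₁ ih₂ =>
      intro x h
      cases h
      exact ⟨_, RProj.prod _ _ _, h₂⟩
  | corec1 t τ => intro x h; exact ⟨x, RProj.corec h, SubTy.refl _⟩
  | corec2 t τ =>
      intro x h
      cases h with
      | corec h' => exact ⟨x, h', SubTy.refl _⟩

/-- Inversion: a well-typed pair has a well-typed first component at any
    available left projection of its type. -/
lemma pair_fst_ty {Ω Ψ : Ctx} {V : VS} {σ : VSTy} (h : HasTy Ω Ψ V σ) :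
    ∀ {W₁ W₂ : VS} {τ₁ : VSTy}, V = .pair W₁ W₂ → LProj σ τ₁ → HasTy Ω Ψ W₁ τ₁ := by
  induction h with
  | omegaVar hm => intro _ _ _ hV _; cases hV
  | psiVar hm => intro _ _ _ hV _; cases hV
  | omegaGen hm => intro _ _ _ hV _; cases hV
  | psiGen hm => intro _ _ _ hV _; cases hV
  | pair hs h₁ h₂ ih₁ ih₂ =>
      intro W₁ W₂ τ₁ hV hp
      injection hV with hV1 hV2
      subst hV1; subst hV2
      cases hp
      exact weaken h₁ (ctxsplit_le hs).1
  | onlyLeftPair h₁ h₂ ih₁ ih₂ =>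
      intro W₁ W₂ τ₁ hV hp
      injection hV with hV1 hV2
      subst hV1; subst hV2
      cases hp
      exact h₁
  | onlyRightPair h₁ h₂ ih₁ ih₂ =>
      intro W₁ W₂ τ₁ hV hp
      cases hp
  | fst h ih => intro _ _ _ hV _; cases hV
  | snd h ih => intro _ _ _ hV _; cases hV
  | sub h hs ih =>
      intro W₁ W₂ τ₁ hV hp
      obtain ⟨σ₁, hσ, hs'⟩ := lproj_sub hs hp
      exact HasTy.sub (ih hV hσ) hs'

lemma pair_snd_ty {Ω Ψ : Ctx} {V : VS} {σ : VSTy} (h : HasTy Ω Ψ V σ) :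
    ∀ {W₁ W₂ : VS} {τ₂ : VSTy}, V = .pair W₁ W₂ → RProj σ τ₂ → HasTy Ω Ψ W₂ τ₂ := by
  induction h with
  | omegaVar hm => intro _ _ _ hV _; cases hV
  | psiVar hm => intro _ _ _ hV _; cases hV
  | omegaGen hm => intro _ _ _ hV _; cases hV
  | psiGen hm => intro _ _ _ hV _; cases hV
  | pair hs h₁ h₂ ih₁ ih₂ =>
      intro W₁ W₂ τ₂ hV hp
      injection hV with hV1 hV2
      subst hV1; subst hV2
      cases hp
      exact weaken h₂ (ctxsplit_le hs).2
  | onlyLeftPair h₁ h₂ ih₁ ih₂ =>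
      intro W₁ W₂ τ₂ hV hp
      cases hp
  | onlyRightPair h₁ h₂ ih₁ ih₂ =>
      intro W₁ W₂ τ₂ hV hp
      injection hV with hV1 hV2
      subst hV1; subst hV2
      cases hp
      exact h₂
  | fst h ih => intro _ _ _ hV _; cases hV
  | snd h ih => intro _ _ _ hV _; cases hV
  | sub h hs ih =>
      intro W₁ W₂ τ₂ hV hp
      obtain ⟨σ₂, hσ, hs'⟩ := rproj_sub hs hp
      exact HasTy.sub (ih hV hσ) hs'

/-- progress and preservation for VS normalization. -/
theorem norm_progress_preservation {Ω Ψ : Ctx} {V : VS} {τ : VSTy}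
    (h : HasTy Ω Ψ V τ) :
    ∃ V', VNorm V V' ∧ HasTy Ω Ψ V' τ := by
  induction h with
  | @omegaVar Ω Ψ u τ hm => exact ⟨.var u, VNorm.var u, HasTy.omegaVar hm⟩
  | @psiVar Ω Ψ u τ hm => exact ⟨.var u, VNorm.var u, HasTy.psiVar hm⟩
  | @omegaGen Ω Ψ g τ hm => exact ⟨.gen g, VNorm.gen g, HasTy.omegaGen hm⟩
  | @psiGen Ω Ψ g τ hm => exact ⟨.gen g, VNorm.gen g, HasTy.psiGen hm⟩
  | pair hs h₁ h₂ ih₁ ih₂ =>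
      obtain ⟨V₁', hn₁, ht₁⟩ := ih₁
      obtain ⟨V₂', hn₂, ht₂⟩ := ih₂
      exact ⟨.pair V₁' V₂', VNorm.pair hn₁ hn₂, HasTy.pair hs ht₁ ht₂⟩
  | onlyLeftPair h₁ h₂ ih₁ ih₂ =>
      obtain ⟨V₁', hn₁, ht₁⟩ := ih₁
      obtain ⟨V₂', hn₂, ht₂⟩ := ih₂
      exact ⟨.pair V₁' V₂', VNorm.pair hn₁ hn₂, HasTy.onlyLeftPair ht₁ ht₂⟩
  | onlyRightPair h₁ h₂ ih₁ ih₂ =>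
      obtain ⟨V₁', hn₁, ht₁⟩ := ih₁
      obtain ⟨V₂', hn₂, ht₂⟩ := ih₂
      exact ⟨.pair V₁' V₂', VNorm.pair hn₁ hn₂, HasTy.onlyRightPair ht₁ ht₂⟩
  | fst h ih =>
      obtain ⟨V', hn, ht⟩ := ih
      cases V' with
      | pair W₁ W₂ =>
          exact ⟨W₁, VNorm.fstPair hn, pair_fst_ty ht rfl (LProj.prod _ _ _)⟩
      | var u => exact ⟨.fst (.var u), VNorm.fstNotPair hn (by intro _ _ h; cases h),
          HasTy.fst ht⟩
      | gen g => exact ⟨.fst (.gen g), VNorm.fstNotPair hn (by intro _ _ h; cases h),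
          HasTy.fst ht⟩
      | fst W => exact ⟨.fst (.fst W), VNorm.fstNotPair hn (by intro _ _ h; cases h),
          HasTy.fst ht⟩
      | snd W => exact ⟨.fst (.snd W), VNorm.fstNotPair hn (by intro _ _ h; cases h),
          HasTy.fst ht⟩
  | snd h ih =>
      obtain ⟨V', hn, ht⟩ := ih
      cases V' with
      | pair W₁ W₂ =>
          exact ⟨W₂, VNorm.sndPair hn, pair_snd_ty ht rfl (RProj.prod _ _ _)⟩
      | var u => exact ⟨.snd (.var u), VNorm.sndNotPair hn (by intro _ _ h; cases h),
          HasTy.snd ht⟩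
      | gen g => exact ⟨.snd (.gen g), VNorm.sndNotPair hn (by intro _ _ h; cases h),
          HasTy.snd ht⟩
      | fst W => exact ⟨.snd (.fst W), VNorm.sndNotPair hn (by intro _ _ h; cases h),
          HasTy.snd ht⟩
      | snd W => exact ⟨.snd (.snd W), VNorm.sndNotPair hn (by intro _ _ h; cases h),
          HasTy.snd ht⟩
  | sub h hs ih =>
      obtain ⟨V', hn, ht⟩ := ih
      exact ⟨V', hn, HasTy.sub ht hs⟩
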